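/- Let R be a commutative algebra over a field K and let I be a nonzero two-sided ideal of the ring D(R) of K-linear differential operators on R (defined via the order filtration D_0(R) = R, D_i(R) = {u ∈ End_K(R) : [r,u] ∈ D_{i-1}(R) for all r ∈ R}). Then I ∩ R ≠ 0, i.e., every nonzero ideal of D(R) has nonzero intersection with R. -/
import Mathlib


/-- The multiplication operator on a commutative `K`-algebra `R` given by an element `r : R`,
viewed as a `K`-linear endomorphism of `R`.  This identifies `R` with `D_0(R)`. -/
noncomputable def mulOp (K : Type*) {R : Type*} [Field K] [CommRing R] [Algebra K R]
    (r : R) : Module.End K R := Algebra.lmul K R r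

/-- `IsDO K n u` means that `u` is a (`K`-linear) differential operator on `R` of order at
most `n` in the sense of the order filtration: `D_{-1}(R) = 0` and
`D_n(R) = {u ∈ End_K(R) : [r, u] ∈ D_{n-1}(R) for all r ∈ R}`. -/
def IsDO (K : Type*) {R : Type*} [Field K] [CommRing R] [Algebra K R] :
    ℕ → Module.End K R → Prop
  | 0, u => ∀ r : R, mulOp K r * u = u * mulOp K r
  | n + 1, u => ∀ r : R, IsDO K n (mulOp K r * u - u * mulOp K r)

/-- The ring `D(R) = ⋃ D_n(R)` of all `K`-linear differential operators on `R`,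
as a subset of `End_K(R)`. -/
def DiffOp (K R : Type*) [Field K] [CommRing R] [Algebra K R] :
    Set (Module.End K R) := {u | ∃ n, IsDO K n u}

/-- `I` is a two-sided ideal of the ring `D(R)`. -/
structure IsIdealOfD (K R : Type*) [Field K] [CommRing R] [Algebra K R]
    (I : Set (Module.End K R)) : Prop where
  subset : I ⊆ DiffOp K R
  zero_mem : (0 : Module.End K R) ∈ I
  add_mem : ∀ u v, u ∈ I → v ∈ I → u + v ∈ I
  neg_mem : ∀ u, u ∈ I → -u ∈ I
  mul_mem_left : ∀ d u, d ∈ DiffOp K R → u ∈ I → d * u ∈ I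
  mul_mem_right : ∀ d u, d ∈ DiffOp K R → u ∈ I → u * d ∈ I

lemma mulOp_apply {K R : Type*} [Field K] [CommRing R] [Algebra K R] (r x : R) :
    mulOp K r x = r * x := rfl

lemma mulOp_isDO_zero {K R : Type*} [Field K] [CommRing R] [Algebra K R] (r : R) :
    IsDO K 0 (mulOp K r) := by
  intro s
  ext x
  simp [mulOp_apply, Module.End.mul_apply, mul_left_comm, mul_comm]

lemma mulOp_mem_DiffOp {K R : Type*} [Field K] [CommRing R] [Algebra K R] (r : R) :
    mulOp K r ∈ DiffOp K R := ⟨0, mulOp_isDO_zero r⟩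

/-- An operator commuting with all multiplications is a multiplication operator. -/
lemma eq_mulOp_of_isDO_zero {K R : Type*} [Field K] [CommRing R] [Algebra K R]
    {u : Module.End K R} (hu : IsDO K 0 u) : u = mulOp K (u 1) := by
  ext r
  have := congrArg (fun w : Module.End K R => w 1) (hu r)
  simp only [Module.End.mul_apply, mulOp_apply, mul_one] at this
  rw [mulOp_apply, mul_comm]
  exact this.symm

/-- Key step: a nonzero element of `I` of order `0` gives the conclusion. -/
lemma stmt0_aux {K R : Type*} [Field K] [CommRing R] [Algebra K R]
    {I : Set (Module.End K R)} {u : Module.End K R}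
    (huI : u ∈ I) (hu : u ≠ 0) (h0 : IsDO K 0 u) :
    ∃ r : R, r ≠ 0 ∧ mulOp K r ∈ I := by
  refine ⟨u 1, ?_, ?_⟩
  · intro h
    apply hu
    rw [eq_mulOp_of_isDO_zero h0, h]
    ext x; simp [mulOp_apply]
  · rw [← eq_mulOp_of_isDO_zero h0]; exact huI

/-- Every nonzero two-sided ideal of `D(R)` has nonzero intersection with `R = D_0(R)`. -/
theorem stmt0 {K R : Type*} [Field K] [CommRing R] [Algebra K R]
    (I : Set (Module.End K R)) (hI : IsIdealOfD K R I)
    (hne : ∃ u ∈ I, u ≠ 0) :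
    ∃ r : R, r ≠ 0 ∧ mulOp K r ∈ I := by
  classical
  have hex : ∃ n, ∃ u ∈ I, u ≠ 0 ∧ IsDO K n u := by
    obtain ⟨u, huI, hu⟩ := hne
    obtain ⟨n, hn⟩ := hI.subset huI
    exact ⟨n, u, huI, hu, hn⟩
  obtain ⟨u, huI, hu, hDO⟩ := Nat.find_spec hex
  cases hn : Nat.find hex with
  | zero =>
    rw [hn] at hDO
    exact stmt0_aux huI hu hDO
  | succ m =>
    rw [hn] at hDO
    -- All brackets [mulOp r, u] lie in I and have order ≤ m < Nat.find hex, hence are 0.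
    have hbr : ∀ r : R, mulOp K r * u - u * mulOp K r = 0 := by
      intro r
      by_contra hvne
      have hvI : mulOp K r * u - u * mulOp K r ∈ I := by
        have h1 := hI.mul_mem_left _ _ (mulOp_mem_DiffOp r) huI
        have h2 := hI.mul_mem_right _ _ (mulOp_mem_DiffOp r) huI
        have := hI.add_mem _ _ h1 (hI.neg_mem _ h2)
        simpa [sub_eq_add_neg] using this
      have : m < Nat.find hex := by omega
      exact Nat.find_min hex this ⟨_, hvI, hvne, hDO r⟩ |>.elim
    have h0 : IsDO K 0 u := fun r => sub_eq_zero.mp (hbr r)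
    exact stmt0_aux huI hu h0
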